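/- For every n ≥ 0, the target algebra T_n of the n-th orbit homomorphism is generated as a left (respectively right) B_n-module by the powers {1, t, t^2, ...}, where B_n = Ψ_n(U(W_{≥-1})). Key identity: Ψ_n(e_m)·t = t·Ψ_n(e_m) + t^{m+1} for all m ≥ -1. -/

import Mathlib

noncomputable section

/-- Generators of `T_n = A_1 ⊗ U(g_n)`: `t`, `∂`, and `v_0, …, v_{n-1}`. -/
inductive TGen (n : ℕ) : Type
  | t : TGen n
  | d : TGen n
  | v : Fin n → TGen n

/-- Defining relations of `T_n = A_1 ⊗ U(g_n)`: `∂t = t∂ + 1`, the `v_i` commute with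
`t` and `∂`, and `[v_i, v_j] = (j-i) v_{i+j}` (with `v_m = 0` for `m ≥ n`). -/
inductive tnRel (k : Type) [Field k] (n : ℕ) :
    FreeAlgebra k (TGen n) → FreeAlgebra k (TGen n) → Prop
  | dt : tnRel k n (FreeAlgebra.ι k (TGen.d : TGen n) * FreeAlgebra.ι k (TGen.t : TGen n))
      (FreeAlgebra.ι k (TGen.t : TGen n) * FreeAlgebra.ι k (TGen.d : TGen n) + 1)
  | tv (i : Fin n) :
      tnRel k n (FreeAlgebra.ι k (TGen.t : TGen n) * FreeAlgebra.ι k (TGen.v i))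
        (FreeAlgebra.ι k (TGen.v i) * FreeAlgebra.ι k (TGen.t : TGen n))
  | dv (i : Fin n) :
      tnRel k n (FreeAlgebra.ι k (TGen.d : TGen n) * FreeAlgebra.ι k (TGen.v i))
        (FreeAlgebra.ι k (TGen.v i) * FreeAlgebra.ι k (TGen.d : TGen n))
  | vv (i j : Fin n) :
      tnRel k n (FreeAlgebra.ι k (TGen.v i) * FreeAlgebra.ι k (TGen.v j))
        (FreeAlgebra.ι k (TGen.v j) * FreeAlgebra.ι k (TGen.v i) +
          ((j : ℤ) - (i : ℤ)) •
            (if h : i.1 + j.1 < n then FreeAlgebra.ι k (TGen.v (⟨i.1 + j.1, h⟩ : Fin n))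
             else 0))

/-- The algebra `T_n = A_1 ⊗ U(g_n)`, presented by generators and relations. -/
abbrev Tn (k : Type) [Field k] (n : ℕ) := RingQuot (tnRel k n)

/-- The element `t ∈ T_n`. -/
def tT (k : Type) [Field k] (n : ℕ) : Tn k n :=
  RingQuot.mkAlgHom k (tnRel k n) (FreeAlgebra.ι k (TGen.t : TGen n))

/-- The element `∂ ∈ T_n`. -/
def dT (k : Type) [Field k] (n : ℕ) : Tn k n :=
  RingQuot.mkAlgHom k (tnRel k n) (FreeAlgebra.ι k (TGen.d : TGen n))

/-- The element `v_j ∈ T_n`. -/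
def vT (k : Type) [Field k] (n : ℕ) (j : Fin n) : Tn k n :=
  RingQuot.mkAlgHom k (tnRel k n) (FreeAlgebra.ι k (TGen.v j))

/-- The image `c_i = Ψ_n(e_i) = t^{i+1}∂ + Σ_{j=0}^{n-1} binom(i+1,j+1) t^{i-j} v_j ∈ T_n`
of the Witt generator `e_i` under the `n`-th orbit homomorphism. -/
def cT (k : Type) [Field k] (n : ℕ) (i : ℤ) : Tn k n :=
  tT k n ^ (i + 1).toNat * dT k n +
    ∑ j : Fin n, (((i + 1).toNat.choose (j.1 + 1) : ℤ)) •
      (tT k n ^ (i - j.1).toNat * vT k n j)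

/-- The image `B_n = Ψ_n(U(W_{≥-1}))`: the subalgebra of `T_n` generated by the
elements `c_i = Ψ_n(e_i)`, `i ≥ -1`. -/
def Bn (k : Type) [Field k] (n : ℕ) : Subalgebra k (Tn k n) :=
  Algebra.adjoin k {x : Tn k n | ∃ i : ℤ, -1 ≤ i ∧ x = cT k n i}

namespace TnAux

variable (k : Type) [Field k] (n : ℕ)

lemma rel_dt : dT k n * tT k n = tT k n * dT k n + 1 := by
  simpa only [dT, tT, map_mul, map_add, map_one] using
    RingQuot.mkAlgHom_rel k (tnRel.dt (k := k) (n := n))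

lemma rel_tv (j : Fin n) : tT k n * vT k n j = vT k n j * tT k n := by
  simpa only [tT, vT, map_mul] using
    RingQuot.mkAlgHom_rel k (tnRel.tv (k := k) (n := n) j)

lemma key (m : ℤ) :
    cT k n m * tT k n = tT k n * cT k n m + tT k n ^ (m + 1).toNat := by
  set t := tT k n with ht
  set d := dT k n with hd
  have hdt : d * t = t * d + 1 := rel_dt k n
  have hvt : ∀ j, vT k n j * t = t * vT k n j := fun j => (rel_tv k n j).symm
  unfold cT
  rw [← ht, ← hd, add_mul, Finset.sum_mul, mul_add, Finset.mul_sum]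
  have h1 : t ^ (m + 1).toNat * d * t = t * (t ^ (m + 1).toNat * d) + t ^ (m + 1).toNat := by
    rw [mul_assoc, hdt, mul_add, mul_one, ← mul_assoc, ← pow_succ, pow_succ', mul_assoc]
  have h2 : ∀ j : Fin n,
      (((m + 1).toNat.choose (j.1 + 1) : ℤ)) • (t ^ (m - j.1).toNat * vT k n j) * t =
      t * ((((m + 1).toNat.choose (j.1 + 1) : ℤ)) • (t ^ (m - j.1).toNat * vT k n j)) := by
    intro j
    rw [smul_mul_assoc, mul_smul_comm, mul_assoc, hvt, ← mul_assoc, ← pow_succ,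
      pow_succ', mul_assoc]
  rw [h1, Finset.sum_congr rfl fun j _ => h2 j]
  abel

lemma cT_mem_Bn {i : ℤ} (hi : -1 ≤ i) : cT k n i ∈ Bn k n :=
  Algebra.subset_adjoin ⟨i, hi, rfl⟩

lemma cT_neg_one : cT k n (-1) = dT k n := by
  simp [cT]

lemma dT_mem_Bn : dT k n ∈ Bn k n :=
  cT_neg_one k n ▸ cT_mem_Bn k n le_rfl

lemma vT_eq (j : Fin n) :
    vT k n j = cT k n j.1 - tT k n ^ (j.1 + 1) * dT k n -
      ∑ i ∈ Finset.univ.erase j,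
        (((j.1 + 1).choose (i.1 + 1) : ℤ)) •
          (tT k n ^ ((j.1 : ℤ) - i.1).toNat * vT k n i) := by
  have hA : ((j.1 : ℤ) + 1).toNat = j.1 + 1 := by omega
  have hsum :
      (∑ i : Fin n, ((((j.1 : ℤ) + 1).toNat.choose (i.1 + 1) : ℤ)) •
          (tT k n ^ ((j.1 : ℤ) - i.1).toNat * vT k n i)) =
      vT k n j + ∑ i ∈ Finset.univ.erase j,
        (((j.1 + 1).choose (i.1 + 1) : ℤ)) •
          (tT k n ^ ((j.1 : ℤ) - i.1).toNat * vT k n i) := by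
    rw [← Finset.add_sum_erase _ _ (Finset.mem_univ j)]
    simp [hA, Nat.choose_self]
  rw [cT, hsum, hA]
  abel

/-! ### Left module version -/

def SL : Submodule k (Tn k n) :=
  Submodule.span k {z : Tn k n | ∃ b ∈ Bn k n, ∃ m : ℕ, z = b * tT k n ^ m}

variable {k n}

lemma mem_SL {b : Tn k n} (hb : b ∈ Bn k n) (m : ℕ) : b * tT k n ^ m ∈ SL k n :=
  Submodule.subset_span ⟨b, hb, m, rfl⟩

lemma SL_mul_tpow {x : Tn k n} (hx : x ∈ SL k n) (a : ℕ) : x * tT k n ^ a ∈ SL k n := by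
  induction hx using Submodule.span_induction with
  | mem x h =>
    obtain ⟨b, hb, m, rfl⟩ := h
    rw [mul_assoc, ← pow_add]
    exact mem_SL hb _
  | zero => rw [zero_mul]; exact zero_mem _
  | add x y hx hy ihx ihy => rw [add_mul]; exact add_mem ihx ihy
  | smul r x hx ih => rw [smul_mul_assoc]; exact Submodule.smul_mem _ _ ih

lemma Bn_mul_SL {b : Tn k n} (hb : b ∈ Bn k n) {x : Tn k n} (hx : x ∈ SL k n) :
    b * x ∈ SL k n := by
  induction hx using Submodule.span_induction with
  | mem x h =>
    obtain ⟨b', hb', m, rfl⟩ := h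
    rw [← mul_assoc]
    exact mem_SL (mul_mem hb hb') _
  | zero => rw [mul_zero]; exact zero_mem _
  | add x y hx hy ihx ihy => rw [mul_add]; exact add_mem ihx ihy
  | smul r x hx ih => rw [mul_smul_comm]; exact Submodule.smul_mem _ _ ih

lemma SL_mul_of {y : Tn k n} (hy : ∀ j : ℕ, tT k n ^ j * y ∈ SL k n)
    {x : Tn k n} (hx : x ∈ SL k n) : x * y ∈ SL k n := by
  induction hx using Submodule.span_induction with
  | mem x h =>
    obtain ⟨b, hb, j, rfl⟩ := h
    rw [mul_assoc]
    exact Bn_mul_SL hb (hy j)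
  | zero => rw [zero_mul]; exact zero_mem _
  | add x y hx hy ihx ihy => rw [add_mul]; exact add_mem ihx ihy
  | smul r x hx ih => rw [smul_mul_assoc]; exact Submodule.smul_mem _ _ ih

lemma tpow_mul_Bn {b : Tn k n} (hb : b ∈ Bn k n) : ∀ m : ℕ, tT k n ^ m * b ∈ SL k n := by
  induction hb using Algebra.adjoin_induction with
  | mem x hx =>
    obtain ⟨i, hi, rfl⟩ := hx
    intro m
    induction m with
    | zero =>
      rw [pow_zero, one_mul]
      simpa using mem_SL (cT_mem_Bn k n hi) 0
    | succ m ih =>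
      have hc : tT k n * cT k n i = cT k n i * tT k n - tT k n ^ (i + 1).toNat := by
        rw [key, add_sub_cancel_right]
      have : tT k n ^ (m + 1) * cT k n i =
          (tT k n ^ m * cT k n i) * tT k n ^ 1 - tT k n ^ (m + (i + 1).toNat) := by
        rw [pow_succ, mul_assoc, hc, mul_sub, pow_one, mul_assoc, ← pow_add]
      rw [this]
      exact sub_mem (SL_mul_tpow ih 1) (by simpa using mem_SL (one_mem _) (m + (i + 1).toNat))
  | algebraMap r =>
    intro m
    rw [← Algebra.commutes r (tT k n ^ m), ← Algebra.smul_def]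
    exact Submodule.smul_mem _ _ (by simpa using mem_SL (one_mem (Bn k n)) m)
  | add x y hx hy ihx ihy =>
    intro m
    rw [mul_add]
    exact add_mem (ihx m) (ihy m)
  | mul x y hx hy ihx ihy =>
    intro m
    rw [← mul_assoc]
    exact SL_mul_of ihy (ihx m)

lemma tpow_mul_SL {y : Tn k n} (hy : y ∈ SL k n) (a : ℕ) : tT k n ^ a * y ∈ SL k n := by
  induction hy using Submodule.span_induction with
  | mem x h =>
    obtain ⟨b, hb, m, rfl⟩ := h
    rw [← mul_assoc]
    exact SL_mul_tpow (tpow_mul_Bn hb a) m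
  | zero => rw [mul_zero]; exact zero_mem _
  | add x y hx hy ihx ihy => rw [mul_add]; exact add_mem ihx ihy
  | smul r x hx ih => rw [mul_smul_comm]; exact Submodule.smul_mem _ _ ih

lemma SL_mul_SL {x y : Tn k n} (hx : x ∈ SL k n) (hy : y ∈ SL k n) : x * y ∈ SL k n :=
  SL_mul_of (fun j => tpow_mul_SL hy j) hx

lemma vT_mem_SL (j : Fin n) : vT k n j ∈ SL k n := by
  have H : ∀ N : ℕ, ∀ j : Fin n, j.1 < N → vT k n j ∈ SL k n := by
    intro N
    induction N with
    | zero => exact fun j h => absurd h (Nat.not_lt_zero _)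
    | succ N ih =>
      intro j hj
      rw [vT_eq]
      refine sub_mem (sub_mem ?_ ?_) (Submodule.sum_mem _ fun i hi => ?_)
      · simpa using mem_SL (cT_mem_Bn k n (show (-1:ℤ) ≤ (j.1:ℤ) by omega)) 0
      · exact tpow_mul_Bn (dT_mem_Bn k n) _
      · have hne : i ≠ j := (Finset.mem_erase.mp hi).1
        rcases lt_or_ge i.1 j.1 with h | h
        · exact zsmul_mem (tpow_mul_SL (ih i (by omega)) _) _
        · have hij : j.1 < i.1 := lt_of_le_of_ne h fun e => hne (Fin.ext e.symm)
          have hz : (((j.1 + 1).choose (i.1 + 1) : ℕ) : ℤ) = 0 := by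
            rw [Nat.choose_eq_zero_of_lt (by omega)]; simp
          rw [hz, zero_zsmul]
          exact zero_mem _
  exact H (j.1 + 1) j (Nat.lt_succ_self _)

lemma SL_top : SL k n = ⊤ := by
  rw [eq_top_iff]
  rintro x -
  obtain ⟨y, rfl⟩ := RingQuot.mkAlgHom_surjective k (tnRel k n) x
  induction y using FreeAlgebra.induction with
  | grade0 r =>
    rw [AlgHom.commutes, Algebra.algebraMap_eq_smul_one]
    exact Submodule.smul_mem _ _ (by simpa using mem_SL (one_mem (Bn k n)) 0)
  | grade1 g =>
    cases g with
    | t => simpa [tT] using mem_SL (one_mem (Bn k n)) 1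
    | d => simpa [dT] using mem_SL (dT_mem_Bn k n) 0
    | v i => exact vT_mem_SL i
  | mul a b iha ihb => rw [map_mul]; exact SL_mul_SL iha ihb
  | add a b iha ihb => rw [map_add]; exact add_mem iha ihb

/-! ### Right module version -/

variable (k n) in
def SR : Submodule k (Tn k n) :=
  Submodule.span k {z : Tn k n | ∃ b ∈ Bn k n, ∃ m : ℕ, z = tT k n ^ m * b}

lemma mem_SR {b : Tn k n} (hb : b ∈ Bn k n) (m : ℕ) : tT k n ^ m * b ∈ SR k n :=
  Submodule.subset_span ⟨b, hb, m, rfl⟩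

lemma tpow_mul_SR {x : Tn k n} (hx : x ∈ SR k n) (a : ℕ) : tT k n ^ a * x ∈ SR k n := by
  induction hx using Submodule.span_induction with
  | mem x h =>
    obtain ⟨b, hb, m, rfl⟩ := h
    rw [← mul_assoc, ← pow_add]
    exact mem_SR hb _
  | zero => rw [mul_zero]; exact zero_mem _
  | add x y hx hy ihx ihy => rw [mul_add]; exact add_mem ihx ihy
  | smul r x hx ih => rw [mul_smul_comm]; exact Submodule.smul_mem _ _ ih

lemma SR_mul_Bn {b : Tn k n} (hb : b ∈ Bn k n) {x : Tn k n} (hx : x ∈ SR k n) :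
    x * b ∈ SR k n := by
  induction hx using Submodule.span_induction with
  | mem x h =>
    obtain ⟨b', hb', m, rfl⟩ := h
    rw [mul_assoc]
    exact mem_SR (mul_mem hb' hb) _
  | zero => rw [zero_mul]; exact zero_mem _
  | add x y hx hy ihx ihy => rw [add_mul]; exact add_mem ihx ihy
  | smul r x hx ih => rw [smul_mul_assoc]; exact Submodule.smul_mem _ _ ih

lemma SR_of_mul {x : Tn k n} (hx : ∀ j : ℕ, x * tT k n ^ j ∈ SR k n)
    {y : Tn k n} (hy : y ∈ SR k n) : x * y ∈ SR k n := by
  induction hy using Submodule.span_induction with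
  | mem y h =>
    obtain ⟨b, hb, j, rfl⟩ := h
    rw [← mul_assoc]
    exact SR_mul_Bn hb (hx j)
  | zero => rw [mul_zero]; exact zero_mem _
  | add x y hx hy ihx ihy => rw [mul_add]; exact add_mem ihx ihy
  | smul r x hx ih => rw [mul_smul_comm]; exact Submodule.smul_mem _ _ ih

lemma Bn_mul_tpow {b : Tn k n} (hb : b ∈ Bn k n) : ∀ m : ℕ, b * tT k n ^ m ∈ SR k n := by
  induction hb using Algebra.adjoin_induction with
  | mem x hx =>
    obtain ⟨i, hi, rfl⟩ := hx
    intro m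
    induction m with
    | zero =>
      rw [pow_zero, mul_one]
      simpa using mem_SR (cT_mem_Bn k n hi) 0
    | succ m ih =>
      have : cT k n i * tT k n ^ (m + 1) =
          tT k n ^ 1 * (cT k n i * tT k n ^ m) + tT k n ^ ((i + 1).toNat + m) := by
        rw [pow_succ', ← mul_assoc, key, add_mul, pow_one, mul_assoc, ← pow_add]
      rw [this]
      exact add_mem (tpow_mul_SR ih 1) (by simpa using mem_SR (one_mem _) ((i + 1).toNat + m))
  | algebraMap r =>
    intro m
    rw [← Algebra.smul_def]
    exact Submodule.smul_mem _ _ (by simpa using mem_SR (one_mem (Bn k n)) m)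
  | add x y hx hy ihx ihy =>
    intro m
    rw [add_mul]
    exact add_mem (ihx m) (ihy m)
  | mul x y hx hy ihx ihy =>
    intro m
    rw [mul_assoc]
    exact SR_of_mul ihx (ihy m)

lemma SR_mul_tpow {y : Tn k n} (hy : y ∈ SR k n) (a : ℕ) : y * tT k n ^ a ∈ SR k n := by
  induction hy using Submodule.span_induction with
  | mem x h =>
    obtain ⟨b, hb, m, rfl⟩ := h
    rw [mul_assoc]
    exact tpow_mul_SR (Bn_mul_tpow hb a) m
  | zero => rw [zero_mul]; exact zero_mem _
  | add x y hx hy ihx ihy => rw [add_mul]; exact add_mem ihx ihy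
  | smul r x hx ih => rw [smul_mul_assoc]; exact Submodule.smul_mem _ _ ih

lemma SR_mul_SR {x y : Tn k n} (hx : x ∈ SR k n) (hy : y ∈ SR k n) : x * y ∈ SR k n :=
  SR_of_mul (fun j => SR_mul_tpow hx j) hy

lemma vT_mem_SR (j : Fin n) : vT k n j ∈ SR k n := by
  have H : ∀ N : ℕ, ∀ j : Fin n, j.1 < N → vT k n j ∈ SR k n := by
    intro N
    induction N with
    | zero => exact fun j h => absurd h (Nat.not_lt_zero _)
    | succ N ih =>
      intro j hj
      rw [vT_eq]
      refine sub_mem (sub_mem ?_ ?_) (Submodule.sum_mem _ fun i hi => ?_)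
      · simpa using mem_SR (cT_mem_Bn k n (show (-1:ℤ) ≤ (j.1:ℤ) by omega)) 0
      · exact mem_SR (dT_mem_Bn k n) _
      · have hne : i ≠ j := (Finset.mem_erase.mp hi).1
        rcases lt_or_ge i.1 j.1 with h | h
        · exact zsmul_mem (tpow_mul_SR (ih i (by omega)) _) _
        · have hij : j.1 < i.1 := lt_of_le_of_ne h fun e => hne (Fin.ext e.symm)
          have hz : (((j.1 + 1).choose (i.1 + 1) : ℕ) : ℤ) = 0 := by
            rw [Nat.choose_eq_zero_of_lt (by omega)]; simp
          rw [hz, zero_zsmul]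
          exact zero_mem _
  exact H (j.1 + 1) j (Nat.lt_succ_self _)

lemma SR_top : SR k n = ⊤ := by
  rw [eq_top_iff]
  rintro x -
  obtain ⟨y, rfl⟩ := RingQuot.mkAlgHom_surjective k (tnRel k n) x
  induction y using FreeAlgebra.induction with
  | grade0 r =>
    rw [AlgHom.commutes, Algebra.algebraMap_eq_smul_one]
    exact Submodule.smul_mem _ _ (by simpa using mem_SR (one_mem (Bn k n)) 0)
  | grade1 g =>
    cases g with
    | t => simpa [tT] using mem_SR (one_mem (Bn k n)) 1
    | d => simpa [dT] using mem_SR (dT_mem_Bn k n) 0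
    | v i => exact vT_mem_SR i
  | mul a b iha ihb => rw [map_mul]; exact SR_mul_SR iha ihb
  | add a b iha ihb => rw [map_add]; exact add_mem iha ihb

end TnAux


/-- For every `n ≥ 0`: the key identity `Ψ_n(e_m)·t = t·Ψ_n(e_m) + t^{m+1}` holds, and
`T_n` is generated as a left (resp. right) `B_n`-module by `{1, t, t², …}`. -/
theorem Tn_generated_by_powers_of_t (k : Type) [Field k] [CharZero k] (n : ℕ) :
    (∀ m : ℤ, -1 ≤ m → cT k n m * tT k n = tT k n * cT k n m + tT k n ^ (m + 1).toNat) ∧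
    Submodule.span k {z : Tn k n | ∃ b ∈ Bn k n, ∃ m : ℕ, z = b * tT k n ^ m} = ⊤ ∧
    Submodule.span k {z : Tn k n | ∃ b ∈ Bn k n, ∃ m : ℕ, z = tT k n ^ m * b} = ⊤ := by
  refine ⟨fun m _ => TnAux.key k n m, TnAux.SL_top, TnAux.SR_top⟩
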